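/- arXiv:1910.12226 — 2 statements merged into one kernel-verified Lean document; each statement's English description precedes it below -/
import Mathlib

section
/- For each n ∈ ℕ let A_n be a symmetric (0,2)-tensor field on P_n, and assume that for every n ∈ ℕ and each scalar patched Markov embedding G_n : P_n → P_{n+1}, the pullback of A_{n+1} by G_n equals A_n, and that A_2 satisfies condition (C1). Set λ := (1/2)·A_1(Z_1^1, Z_1^1)_{p_{1/2}}. Then for every u ∈ (0,1), A_1(Z_1^1, Z_1^1)_{p_u} = (λ/4)·(1/u² + 1/(1−u)²). -/
open Finset

noncomputable section

/-- `Psim n` is the space `P_n` of positive probability measures on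
`Ω_{n+1} = {1,…,n+1}`, viewed as a subset of `ℝ^{n+1}`. -/
def Psim (n : ℕ) : Set (Fin (n + 1) → ℝ) :=
  {p | (∀ i, p i ∈ Set.Ioo (0 : ℝ) 1) ∧ ∑ i, p i = 1}

/-- The tangent space of `P_n` (at any point): vectors in `ℝ^{n+1}` whose
coordinates sum to zero. -/
def Tang (n : ℕ) : Set (Fin (n + 1) → ℝ) :=
  {X | ∑ i, X i = 0}

/-- `B` is a symmetric bilinear form on `ℝ^{n+1}` (the value of a symmetric
`(0,2)`-tensor field at a point). -/
def IsSymmBilin {n : ℕ} (B : (Fin (n + 1) → ℝ) → (Fin (n + 1) → ℝ) → ℝ) : Prop :=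
  (∀ X Y, B X Y = B Y X) ∧
  (∀ (c : ℝ) (X X' Y : Fin (n + 1) → ℝ), B (c • X + X') Y = c * B X Y + B X' Y)

/-- `A` is a family of symmetric `(0,2)`-tensor fields `A_n` on `P_n`
(indices `n ≥ 1`, matching the paper's `ℕ = {1,2,…}`). -/
def SymmTF (A : (n : ℕ) → (Fin (n + 1) → ℝ) → (Fin (n + 1) → ℝ) → (Fin (n + 1) → ℝ) → ℝ) :
    Prop :=
  ∀ n : ℕ, 0 < n → ∀ p ∈ Psim n, IsSymmBilin (A n p)

/-- The scalar patched Markov embedding `G_n^{α,σ} : P_n → P_{n+1}`,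
`G_n^{α,σ}(p) = α ∑_{i ∈ Ω_{n+1}} p(i) δ_{σ(i)} + (1-α) δ_{σ(n+2)}`. -/
def sPatch (n : ℕ) (α : ℝ) (σ : Equiv.Perm (Fin (n + 2))) (p : Fin (n + 1) → ℝ) :
    Fin (n + 2) → ℝ := fun I =>
  α * ∑ i : Fin (n + 1), p i * (if σ i.castSucc = I then 1 else 0) +
    (1 - α) * (if σ (Fin.last (n + 1)) = I then 1 else 0)

/-- The differential of `G_n^{α,σ}`: `dG(X) = α ∑_i X^i δ_{σ(i)}`. -/
def sPatchD (n : ℕ) (α : ℝ) (σ : Equiv.Perm (Fin (n + 2))) (X : Fin (n + 1) → ℝ) :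
    Fin (n + 2) → ℝ := fun I =>
  α * ∑ i : Fin (n + 1), X i * (if σ i.castSucc = I then 1 else 0)

/-- A general patched Markov embedding `G_n : P_n → P_{n+1}` with weights `a_i`:
`G_n(p) = ∑_i p(i) (a_i δ_{σ(i)} + (1-a_i) δ_{σ(n+2)})`. -/
def patch (n : ℕ) (a : Fin (n + 1) → ℝ) (σ : Equiv.Perm (Fin (n + 2)))
    (p : Fin (n + 1) → ℝ) : Fin (n + 2) → ℝ := fun I =>
  ∑ i : Fin (n + 1), p i * (a i * (if σ i.castSucc = I then 1 else 0) +
    (1 - a i) * (if σ (Fin.last (n + 1)) = I then 1 else 0))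

/-- The differential of a patched Markov embedding. -/
def patchD (n : ℕ) (a : Fin (n + 1) → ℝ) (σ : Equiv.Perm (Fin (n + 2)))
    (X : Fin (n + 1) → ℝ) : Fin (n + 2) → ℝ := fun I =>
  ∑ i : Fin (n + 1), X i * (a i * (if σ i.castSucc = I then 1 else 0) +
    (1 - a i) * (if σ (Fin.last (n + 1)) = I then 1 else 0))

/-- Invariance of the family `{A_n}` under scalar patched Markov embeddings:
the pullback of `A_{n+1}` by each `G_n^{α,σ}` equals `A_n`. -/
def InvariantSP
    (A : (n : ℕ) → (Fin (n + 1) → ℝ) → (Fin (n + 1) → ℝ) → (Fin (n + 1) → ℝ) → ℝ) : Prop :=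
  ∀ n : ℕ, 0 < n → ∀ α ∈ Set.Ioo (0 : ℝ) 1, ∀ σ : Equiv.Perm (Fin (n + 2)),
    ∀ p ∈ Psim n, ∀ X ∈ Tang n, ∀ Y ∈ Tang n,
      A (n + 1) (sPatch n α σ p) (sPatchD n α σ X) (sPatchD n α σ Y) = A n p X Y

/-- The vector field `Z_i^n` on `P_n`, with (constant) coordinates
`e_i - (1/(n+1)) ∑_j e_j`. -/
def Zvec (n : ℕ) (i : Fin (n + 1)) : Fin (n + 1) → ℝ :=
  fun k => (if k = i then 1 else 0) - 1 / (n + 1)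

/-- The uniform probability measure `b_n ∈ P_n`. -/
def bunif (n : ℕ) : Fin (n + 1) → ℝ := fun _ => 1 / (n + 1)

/-- The point `p_u ∈ P_1`: `p_u(1) = u`, `p_u(2) = 1 - u`. -/
def pu (u : ℝ) : Fin 2 → ℝ := ![u, 1 - u]

/-- The tensor field `A_n^d(X,Y)_p = ∑_i X^i Y^i / p(i)²`. -/
def Ad (n : ℕ) (p X Y : Fin (n + 1) → ℝ) : ℝ := ∑ i, X i * Y i / (p i) ^ 2

/-- The tensor field `A_n^s(X,Y)_p = (∑_i X^i/p(i)) (∑_j Y^j/p(j))`. -/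
def As (n : ℕ) (p X Y : Fin (n + 1) → ℝ) : ℝ := (∑ i, X i / p i) * (∑ j, Y j / p j)

/-- The Fisher metric `g_n^F(X,Y)_p = ∑_i X^i Y^i / p(i)`. -/
def Fish (n : ℕ) (p X Y : Fin (n + 1) → ℝ) : ℝ := ∑ i, X i * Y i / p i

/-- The point `ψ_u^σ(α) = G_1^{α,σ}(p_u) ∈ P_2` (the indices `1,2,3` of `Ω_3`
are `0,1,2 : Fin 3`). -/
def psiPt (α u : ℝ) (σ : Equiv.Perm (Fin 3)) : Fin 3 → ℝ := sPatch 1 α σ (pu u)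

/-- `E^k ⊂ TP_2`: the line spanned by `Z_i^2 - Z_j^2 = e_i - e_j` where
`{i,j,k} = {0,1,2}`; equivalently, the sum-zero vectors vanishing at `k`. -/
def Esub (k : Fin 3) : Set (Fin 3 → ℝ) := {W | (∑ i, W i = 0) ∧ W k = 0}

/-- `u_α^{ij}` (formed with `σ = id`). -/
def uRatio (α u : ℝ) (i j : Fin 3) : ℝ :=
  psiPt α u (Equiv.refl (Fin 3)) i /
    (psiPt α u (Equiv.refl (Fin 3)) i + psiPt α u (Equiv.refl (Fin 3)) j)

/-- The image `dH^{ij}_q(Z_1^1) = ((q(i)+q(j))/2) (Z_i^2 - Z_j^2)` of `Z_1^1`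
under the differential of `H_q^{ij} : P_1 → P_2`. -/
def dHvec (q : Fin 3 → ℝ) (i j : Fin 3) : Fin 3 → ℝ :=
  ((q i + q j) / 2) • (Zvec 2 i - Zvec 2 j)

/-- Condition (C1) for `A_2`. -/
def CondC1 (A2 : (Fin 3 → ℝ) → (Fin 3 → ℝ) → (Fin 3 → ℝ) → ℝ) : Prop :=
  ∃ r : ℝ → ℝ, (∀ t : ℝ, 0 < t → 0 < r t) ∧ (∀ t : ℝ, 0 < t → r t * r (1 / t) = 1) ∧
    ∀ α ∈ Set.Ioo (0 : ℝ) 1, ∀ u ∈ Set.Ioo (0 : ℝ) 1, ∀ σ : Equiv.Perm (Fin 3),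
      ∀ W1 W2 W3 : Fin 3 → ℝ, W1 ∈ Esub (σ 0) → W2 ∈ Esub (σ 1) → W3 ∈ Esub (σ 2) →
        W3 = W1 + W2 →
        A2 (psiPt α u σ) W3 W1 = r (u / (1 - u)) * A2 (psiPt α u σ) W3 W2

/-- Condition (C2) for `A_1` and `A_2`: `A_1` is positive semidefinite and
degenerate at `b_1`, and the parallelism identity holds. -/
def CondC2 (A1 : (Fin 2 → ℝ) → (Fin 2 → ℝ) → (Fin 2 → ℝ) → ℝ)
    (A2 : (Fin 3 → ℝ) → (Fin 3 → ℝ) → (Fin 3 → ℝ) → ℝ) : Prop :=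
  (∀ p ∈ Psim 1, ∀ X ∈ Tang 1, 0 ≤ A1 p X X) ∧
  (∃ X ∈ Tang 1, X ≠ 0 ∧ ∀ Y ∈ Tang 1, A1 (bunif 1) X Y = 0) ∧
  (∀ α ∈ Set.Ioo (0 : ℝ) 1, ∀ u ∈ Set.Ioo (0 : ℝ) 1, ∀ σ : Equiv.Perm (Fin 3),
    ∀ i j k l : Fin 3, i ≠ j → k ≠ l →
      A2 (psiPt α u σ) (dHvec (psiPt α u σ) (σ i) (σ j)) (dHvec (psiPt α u σ) (σ k) (σ l)) =
        (Real.sign (2 * uRatio α u i j - 1) *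
            Real.sqrt (A1 (pu (uRatio α u i j)) (Zvec 1 0) (Zvec 1 0))) *
        (Real.sign (2 * uRatio α u k l - 1) *
            Real.sqrt (A1 (pu (uRatio α u k l)) (Zvec 1 0) (Zvec 1 0))))

/-- `H : P_m → P_n` (together with its linear differential `dH`) is a
composition of scalar patched Markov embeddings. -/
inductive IsSPMComp :
    (m n : ℕ) → ((Fin (m + 1) → ℝ) → (Fin (n + 1) → ℝ)) →
      ((Fin (m + 1) → ℝ) → (Fin (n + 1) → ℝ)) → Prop
  | refl (m : ℕ) : IsSPMComp m m id id
  | step {m n : ℕ} {H dH : (Fin (m + 1) → ℝ) → (Fin (n + 1) → ℝ)} (α : ℝ)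
      (hα : α ∈ Set.Ioo (0 : ℝ) 1) (σ : Equiv.Perm (Fin (n + 2)))
      (h : IsSPMComp m n H dH) :
      IsSPMComp m (n + 1) (fun p => sPatch n α σ (H p)) (fun X => sPatchD n α σ (dH X))

/-- `Q` is a Markov partition: each `Q i` is a probability measure on `Ω_{N+1}`
and the supports of the `Q i` are pairwise disjoint with union `Ω_{N+1}`. -/
def IsMarkovPartition {n N : ℕ} (Q : Fin (n + 1) → Fin (N + 1) → ℝ) : Prop :=
  (∀ i, (∀ I, 0 ≤ Q i I) ∧ ∑ I, Q i I = 1) ∧ (∀ I, ∃! i, Q i I ≠ 0)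

/-- The Markov embedding `F(p) = ∑_i p(i) Q_i` induced by `Q` (the same formula
gives its differential on tangent vectors). -/
def mEmb {n N : ℕ} (Q : Fin (n + 1) → Fin (N + 1) → ℝ) (p : Fin (n + 1) → ℝ) :
    Fin (N + 1) → ℝ := fun I => ∑ i, p i * Q i I

/-- `A_n^{λ,μ} = λ A_n^d + μ A_n^s`. -/
def Alm (n : ℕ) (lam mu : ℝ) (p X Y : Fin (n + 1) → ℝ) : ℝ :=
  lam * Ad n p X Y + mu * As n p X Y
/-! Auxiliary lemmas -/

/-- basis difference vector `e_i - e_j` in `ℝ³`. -/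
def vv (i j : Fin 3) : Fin 3 → ℝ :=
  fun I => (if i = I then 1 else 0) - (if j = I then 1 else 0)

lemma vv_mem (i j k : Fin 3) (hik : i ≠ k) (hjk : j ≠ k) : vv i j ∈ Esub k := by
  constructor
  · fin_cases i <;> fin_cases j <;> simp [vv, Fin.sum_univ_three]
  · simp [vv, hik, hjk]

lemma bil_zero {n : ℕ} {B : (Fin (n+1) → ℝ) → (Fin (n+1) → ℝ) → ℝ}
    (hB : IsSymmBilin B) (Y : Fin (n+1) → ℝ) : B 0 Y = 0 := by
  have h := hB.2 1 0 0 Y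
  simp at h
  linarith

lemma bil_smul {n : ℕ} {B : (Fin (n+1) → ℝ) → (Fin (n+1) → ℝ) → ℝ}
    (hB : IsSymmBilin B) (c : ℝ) (X Y : Fin (n+1) → ℝ) : B (c • X) Y = c * B X Y := by
  have h := hB.2 c X 0 Y
  simpa [bil_zero hB] using h

lemma bil_add {n : ℕ} {B : (Fin (n+1) → ℝ) → (Fin (n+1) → ℝ) → ℝ}
    (hB : IsSymmBilin B) (X X' Y : Fin (n+1) → ℝ) : B (X + X') Y = B X Y + B X' Y := by
  have h := hB.2 1 X X' Y
  simpa using h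

lemma bil_add' {n : ℕ} {B : (Fin (n+1) → ℝ) → (Fin (n+1) → ℝ) → ℝ}
    (hB : IsSymmBilin B) (X Y Y' : Fin (n+1) → ℝ) : B X (Y + Y') = B X Y + B X Y' := by
  rw [hB.1, bil_add hB, hB.1 Y X, hB.1 Y' X]

lemma bil_smul2 {n : ℕ} {B : (Fin (n+1) → ℝ) → (Fin (n+1) → ℝ) → ℝ}
    (hB : IsSymmBilin B) (c : ℝ) (X Y : Fin (n+1) → ℝ) :
    B (c • X) (c • Y) = c ^ 2 * B X Y := by
  rw [bil_smul hB, hB.1, bil_smul hB, hB.1 Y X]; ring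

lemma bil_neg2 {n : ℕ} {B : (Fin (n+1) → ℝ) → (Fin (n+1) → ℝ) → ℝ}
    (hB : IsSymmBilin B) (X Y : Fin (n+1) → ℝ) : B (-X) (-Y) = B X Y := by
  have h := bil_smul2 hB (-1) X Y
  simpa using h

lemma pu_mem {u : ℝ} (hu : u ∈ Set.Ioo (0:ℝ) 1) : pu u ∈ Psim 1 := by
  obtain ⟨h0, h1⟩ := hu
  constructor
  · intro i; fin_cases i <;> constructor <;> simp [pu] <;> linarith
  · simp [pu, Fin.sum_univ_two]

lemma Z_mem : Zvec 1 0 ∈ Tang 1 := by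
  simp [Zvec, Tang, Fin.sum_univ_two]
  norm_num

lemma mem3 {x y z : ℝ} (hx : 0 < x) (hy : 0 < y) (hz : 0 < z) (hs : x + y + z = 1) :
    ![x, y, z] ∈ Psim 2 := by
  constructor
  · intro i; fin_cases i <;> constructor <;> simp <;> linarith
  · simp [Fin.sum_univ_three]; linarith

lemma sPatchD_Z (α : ℝ) (σ : Equiv.Perm (Fin 3)) :
    sPatchD 1 α σ (Zvec 1 0) = (α / 2) • vv (σ 0) (σ 1) := by
  funext I
  have h0 : ((0 : Fin 2).castSucc : Fin 3) = 0 := rfl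
  have h1 : ((1 : Fin 2).castSucc : Fin 3) = 1 := rfl
  simp only [sPatchD, vv, Pi.smul_apply, smul_eq_mul]
  rw [Fin.sum_univ_two]
  simp only [Zvec, h0, h1]
  norm_num [Fin.ext_iff]
  split_ifs <;> ring

lemma pull (A : (n : ℕ) → (Fin (n + 1) → ℝ) → (Fin (n + 1) → ℝ) → (Fin (n + 1) → ℝ) → ℝ)
    (hinv : InvariantSP A) {α u : ℝ} (hα : α ∈ Set.Ioo (0:ℝ) 1) (hu : u ∈ Set.Ioo (0:ℝ) 1)
    (σ : Equiv.Perm (Fin 3)) :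
    A 2 (psiPt α u σ) ((α/2) • vv (σ 0) (σ 1)) ((α/2) • vv (σ 0) (σ 1))
      = A 1 (pu u) (Zvec 1 0) (Zvec 1 0) := by
  have h := hinv 1 one_pos α hα σ (pu u) (pu_mem hu) _ Z_mem _ Z_mem
  rw [sPatchD_Z] at h
  exact h

lemma sPatch_eq (α : ℝ) (σ : Equiv.Perm (Fin 3)) (p : Fin 2 → ℝ) (I : Fin 3) :
    sPatch 1 α σ p I = α * p 0 * (if σ 0 = I then 1 else 0) +
      α * p 1 * (if σ 1 = I then 1 else 0) + (1 - α) * (if σ 2 = I then 1 else 0) := by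
  have h0 : ((0 : Fin 2).castSucc : Fin 3) = 0 := rfl
  have h1 : ((1 : Fin 2).castSucc : Fin 3) = 1 := rfl
  have h2 : (Fin.last 2 : Fin 3) = 2 := rfl
  simp only [sPatch]
  rw [Fin.sum_univ_two, h0, h1]
  norm_num [show (Fin.last (1+1) : Fin 3) = 2 from rfl]
  split_ifs <;> ring

lemma psiPt_eq (α u : ℝ) (σ : Equiv.Perm (Fin 3)) (I : Fin 3) :
    psiPt α u σ I = α * u * (if σ 0 = I then 1 else 0) +
      α * (1 - u) * (if σ 1 = I then 1 else 0) + (1 - α) * (if σ 2 = I then 1 else 0) := by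
  rw [psiPt, sPatch_eq]
  simp [pu]

lemma ptA {x y z : ℝ} (hx : 0 < x) (hy : 0 < y) (hs : x + y + z = 1) :
    psiPt (x+y) (x/(x+y)) (Equiv.refl (Fin 3)) = ![x, y, z] := by
  have hxy : x + y ≠ 0 := by positivity
  funext I
  rw [psiPt_eq]
  fin_cases I
  · simp
    try field_simp
  · simp
    try field_simp
    try ring
  · simp
    try linarith

lemma ptB {x y z : ℝ} (hx : 0 < x) (hz : 0 < z) (hs : x + y + z = 1) :
    psiPt (x+z) (x/(x+z)) (Equiv.swap 1 2) = ![x, y, z] := by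
  have hxz : x + z ≠ 0 := by positivity
  have e0 : (Equiv.swap (1:Fin 3) 2) 0 = 0 := by decide
  have e1 : (Equiv.swap (1:Fin 3) 2) 1 = 2 := by decide
  have e2 : (Equiv.swap (1:Fin 3) 2) 2 = 1 := by decide
  funext I
  rw [psiPt_eq, e0, e1, e2]
  fin_cases I
  · simp
    try field_simp
  · simp
    try linarith
  · simp
    try field_simp
    try ring

lemma ptC {x y z : ℝ} (hx : 0 < x) (hy : 0 < y) (hs : x + y + z = 1) :
    psiPt (x+y) (y/(x+y)) (Equiv.swap 0 1) = ![x, y, z] := by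
  have hxy : x + y ≠ 0 := by positivity
  have e0 : (Equiv.swap (0:Fin 3) 1) 0 = 1 := by decide
  have e1 : (Equiv.swap (0:Fin 3) 1) 1 = 0 := by decide
  have e2 : (Equiv.swap (0:Fin 3) 1) 2 = 2 := by decide
  funext I
  rw [psiPt_eq, e0, e1, e2]
  fin_cases I
  · simp
    try field_simp
    try ring
  · simp
    try field_simp
  · simp
    try linarith

lemma pullA (A : (n : ℕ) → (Fin (n + 1) → ℝ) → (Fin (n + 1) → ℝ) → (Fin (n + 1) → ℝ) → ℝ)
    (hsymm : SymmTF A) (hinv : InvariantSP A) {x y z : ℝ}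
    (hx : 0 < x) (hy : 0 < y) (hz : 0 < z) (hs : x + y + z = 1) :
    A 2 ![x,y,z] (vv 0 1) (vv 0 1)
      = 4 / (x+y)^2 * A 1 (pu (x/(x+y))) (Zvec 1 0) (Zvec 1 0) := by
  have hxy : (0:ℝ) < x + y := by positivity
  have hα : x + y ∈ Set.Ioo (0:ℝ) 1 := ⟨hxy, by linarith⟩
  have hu : x/(x+y) ∈ Set.Ioo (0:ℝ) 1 :=
    ⟨div_pos hx hxy, (div_lt_one hxy).2 (by linarith)⟩
  have h := pull A hinv hα hu (Equiv.refl _)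
  simp only [Equiv.refl_apply] at h
  rw [ptA hx hy hs] at h
  have hB := hsymm 2 (by norm_num) ![x,y,z] (mem3 hx hy hz hs)
  rw [bil_smul2 hB] at h
  rw [← h]
  field_simp
  ring

lemma pullB (A : (n : ℕ) → (Fin (n + 1) → ℝ) → (Fin (n + 1) → ℝ) → (Fin (n + 1) → ℝ) → ℝ)
    (hsymm : SymmTF A) (hinv : InvariantSP A) {x y z : ℝ}
    (hx : 0 < x) (hy : 0 < y) (hz : 0 < z) (hs : x + y + z = 1) :
    A 2 ![x,y,z] (vv 0 2) (vv 0 2)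
      = 4 / (x+z)^2 * A 1 (pu (x/(x+z))) (Zvec 1 0) (Zvec 1 0) := by
  have hxz : (0:ℝ) < x + z := by positivity
  have hα : x + z ∈ Set.Ioo (0:ℝ) 1 := ⟨hxz, by linarith⟩
  have hu : x/(x+z) ∈ Set.Ioo (0:ℝ) 1 :=
    ⟨div_pos hx hxz, (div_lt_one hxz).2 (by linarith)⟩
  have h := pull A hinv hα hu (Equiv.swap 1 2)
  rw [show (Equiv.swap (1:Fin 3) 2) 0 = 0 from by decide,
    show (Equiv.swap (1:Fin 3) 2) 1 = 2 from by decide, ptB hx hz hs] at h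
  have hB := hsymm 2 (by norm_num) ![x,y,z] (mem3 hx hy hz hs)
  rw [bil_smul2 hB] at h
  rw [← h]
  field_simp
  ring

lemma pullC (A : (n : ℕ) → (Fin (n + 1) → ℝ) → (Fin (n + 1) → ℝ) → (Fin (n + 1) → ℝ) → ℝ)
    (hsymm : SymmTF A) (hinv : InvariantSP A) {x y z : ℝ}
    (hx : 0 < x) (hy : 0 < y) (hz : 0 < z) (hs : x + y + z = 1) :
    A 2 ![x,y,z] (vv 1 0) (vv 1 0)
      = 4 / (x+y)^2 * A 1 (pu (y/(x+y))) (Zvec 1 0) (Zvec 1 0) := by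
  have hxy : (0:ℝ) < x + y := by positivity
  have hα : x + y ∈ Set.Ioo (0:ℝ) 1 := ⟨hxy, by linarith⟩
  have hu : y/(x+y) ∈ Set.Ioo (0:ℝ) 1 :=
    ⟨div_pos hy hxy, (div_lt_one hxy).2 (by linarith)⟩
  have h := pull A hinv hα hu (Equiv.swap 0 1)
  rw [show (Equiv.swap (0:Fin 3) 1) 0 = 1 from by decide,
    show (Equiv.swap (0:Fin 3) 1) 1 = 0 from by decide, ptC hx hy hs] at h
  have hB := hsymm 2 (by norm_num) ![x,y,z] (mem3 hx hy hz hs)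
  rw [bil_smul2 hB] at h
  rw [← h]
  field_simp
  ring

lemma fsymm (A : (n : ℕ) → (Fin (n + 1) → ℝ) → (Fin (n + 1) → ℝ) → (Fin (n + 1) → ℝ) → ℝ)
    (hsymm : SymmTF A) (hinv : InvariantSP A) {u : ℝ} (hu : u ∈ Set.Ioo (0:ℝ) 1) :
    A 1 (pu u) (Zvec 1 0) (Zvec 1 0) = A 1 (pu (1-u)) (Zvec 1 0) (Zvec 1 0) := by
  obtain ⟨hu0, hu1⟩ := hu
  have hx : (0:ℝ) < u/2 := by linarith
  have hy : (0:ℝ) < (1-u)/2 := by linarith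
  have hz : (0:ℝ) < (1/2:ℝ) := by norm_num
  have hs : u/2 + (1-u)/2 + 1/2 = 1 := by ring
  have hA := pullA A hsymm hinv hx hy hz hs
  have hC := pullC A hsymm hinv hx hy hz hs
  have hB := hsymm 2 (by norm_num) ![u/2,(1-u)/2,1/2] (mem3 hx hy hz hs)
  have hneg : vv 1 0 = -(vv 0 1) := by
    funext I; simp [vv]; try ring
  rw [hneg, bil_neg2 hB] at hC
  have e3 : u/2 + (1-u)/2 = 1/2 := by ring
  have e1 : u/2/(u/2+(1-u)/2) = u := by rw [e3]; ring
  have e2 : (1-u)/2/(u/2+(1-u)/2) = 1-u := by rw [e3]; ring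
  rw [e1] at hA
  rw [e2] at hC
  rw [e3] at hA hC
  rw [hA] at hC
  norm_num at hC
  linarith

lemma c1A (A2 : (Fin 3 → ℝ) → (Fin 3 → ℝ) → (Fin 3 → ℝ) → ℝ) (r : ℝ → ℝ)
    (hr : ∀ α ∈ Set.Ioo (0 : ℝ) 1, ∀ u ∈ Set.Ioo (0 : ℝ) 1, ∀ σ : Equiv.Perm (Fin 3),
      ∀ W1 W2 W3 : Fin 3 → ℝ, W1 ∈ Esub (σ 0) → W2 ∈ Esub (σ 1) → W3 ∈ Esub (σ 2) →
        W3 = W1 + W2 →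
        A2 (psiPt α u σ) W3 W1 = r (u / (1 - u)) * A2 (psiPt α u σ) W3 W2)
    {x y z : ℝ} (hx : 0 < x) (hy : 0 < y) (hz : 0 < z) (hs : x + y + z = 1) :
    A2 ![x,y,z] (vv 0 1) (vv 2 1) = r (x/y) * A2 ![x,y,z] (vv 0 1) (vv 0 2) := by
  have hxy : (0:ℝ) < x + y := by positivity
  have hα : x + y ∈ Set.Ioo (0:ℝ) 1 := ⟨hxy, by linarith⟩
  have hu : x/(x+y) ∈ Set.Ioo (0:ℝ) 1 :=
    ⟨div_pos hx hxy, (div_lt_one hxy).2 (by linarith)⟩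
  have hsplit : vv 0 1 = vv 2 1 + vv 0 2 := by
    funext I; simp [vv]; try ring
  have h := hr (x+y) hα (x/(x+y)) hu (Equiv.refl _) (vv 2 1) (vv 0 2) (vv 0 1)
    (vv_mem 2 1 0 (by decide) (by decide)) (vv_mem 0 2 1 (by decide) (by decide))
    (vv_mem 0 1 2 (by decide) (by decide)) hsplit
  rw [ptA hx hy hs] at h
  have hrat : x/(x+y) / (1 - x/(x+y)) = x/y := by
    rw [show (1:ℝ) - x/(x+y) = y/(x+y) from by field_simp; ring]
    rw [div_div_div_eq]
    have h1 : x + y ≠ 0 := ne_of_gt hxy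
    have h2 : y ≠ 0 := ne_of_gt hy
    field_simp
  rwa [hrat] at h

lemma c1B (A2 : (Fin 3 → ℝ) → (Fin 3 → ℝ) → (Fin 3 → ℝ) → ℝ) (r : ℝ → ℝ)
    (hr : ∀ α ∈ Set.Ioo (0 : ℝ) 1, ∀ u ∈ Set.Ioo (0 : ℝ) 1, ∀ σ : Equiv.Perm (Fin 3),
      ∀ W1 W2 W3 : Fin 3 → ℝ, W1 ∈ Esub (σ 0) → W2 ∈ Esub (σ 1) → W3 ∈ Esub (σ 2) →
        W3 = W1 + W2 →
        A2 (psiPt α u σ) W3 W1 = r (u / (1 - u)) * A2 (psiPt α u σ) W3 W2)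
    {x y z : ℝ} (hx : 0 < x) (hy : 0 < y) (hz : 0 < z) (hs : x + y + z = 1) :
    A2 ![x,y,z] (vv 0 2) (vv 1 2) = r (x/z) * A2 ![x,y,z] (vv 0 2) (vv 0 1) := by
  have hxz : (0:ℝ) < x + z := by positivity
  have hα : x + z ∈ Set.Ioo (0:ℝ) 1 := ⟨hxz, by linarith⟩
  have hu : x/(x+z) ∈ Set.Ioo (0:ℝ) 1 :=
    ⟨div_pos hx hxz, (div_lt_one hxz).2 (by linarith)⟩
  have hsplit : vv 0 2 = vv 1 2 + vv 0 1 := by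
    funext I; simp [vv]; try ring
  have h := hr (x+z) hα (x/(x+z)) hu (Equiv.swap 1 2) (vv 1 2) (vv 0 1) (vv 0 2)
    (by rw [show (Equiv.swap (1:Fin 3) 2) 0 = 0 from by decide]
        exact vv_mem 1 2 0 (by decide) (by decide))
    (by rw [show (Equiv.swap (1:Fin 3) 2) 1 = 2 from by decide]
        exact vv_mem 0 1 2 (by decide) (by decide))
    (by rw [show (Equiv.swap (1:Fin 3) 2) 2 = 1 from by decide]
        exact vv_mem 0 2 1 (by decide) (by decide))
    hsplit
  rw [ptB hx hz hs] at h
  have hrat : x/(x+z) / (1 - x/(x+z)) = x/z := by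
    rw [show (1:ℝ) - x/(x+z) = z/(x+z) from by field_simp; ring]
    rw [div_div_div_eq]
    have h1 : x + z ≠ 0 := ne_of_gt hxz
    have h2 : z ≠ 0 := ne_of_gt hz
    field_simp
  rwa [hrat] at h

lemma MI (A : (n : ℕ) → (Fin (n + 1) → ℝ) → (Fin (n + 1) → ℝ) → (Fin (n + 1) → ℝ) → ℝ)
    (hsymm : SymmTF A) (hinv : InvariantSP A) (r : ℝ → ℝ)
    (hr : ∀ α ∈ Set.Ioo (0 : ℝ) 1, ∀ u ∈ Set.Ioo (0 : ℝ) 1, ∀ σ : Equiv.Perm (Fin 3),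
      ∀ W1 W2 W3 : Fin 3 → ℝ, W1 ∈ Esub (σ 0) → W2 ∈ Esub (σ 1) → W3 ∈ Esub (σ 2) →
        W3 = W1 + W2 →
        A 2 (psiPt α u σ) W3 W1 = r (u / (1 - u)) * A 2 (psiPt α u σ) W3 W2)
    {s t : ℝ} (hs : 0 < s) (ht : 0 < t) :
    A 1 (pu (1/(1+s))) (Zvec 1 0) (Zvec 1 0) * ((1+t)^2 * (1 + r (1/t)))
      = A 1 (pu (1/(1+t))) (Zvec 1 0) (Zvec 1 0) * ((1+s)^2 * (1 + r (1/s))) := by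
  set x : ℝ := 1/(1+s+t) with hxdef
  have hst : (0:ℝ) < 1 + s + t := by linarith
  have hx : 0 < x := by positivity
  have hy : 0 < s * x := by positivity
  have hz : 0 < t * x := by positivity
  have hsum : x + s * x + t * x = 1 := by
    rw [hxdef]; field_simp
  have hB := hsymm 2 (by norm_num) ![x, s*x, t*x] (mem3 hx hy hz hsum)
  -- decompositions
  have hsplit1 : vv 0 1 = vv 2 1 + vv 0 2 := by funext I; simp [vv]; try ring
  have hsplit2 : vv 0 2 = vv 1 2 + vv 0 1 := by funext I; simp [vv]; try ring
  have hxy : x/(s*x) = 1/s := by field_simp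
  have hxz : x/(t*x) = 1/t := by field_simp
  -- eq1
  have eq1 : A 2 ![x,s*x,t*x] (vv 0 1) (vv 0 1)
      = (1 + r (1/s)) * A 2 ![x,s*x,t*x] (vv 0 1) (vv 0 2) := by
    have e : A 2 ![x,s*x,t*x] (vv 0 1) (vv 0 1)
        = A 2 ![x,s*x,t*x] (vv 0 1) (vv 2 1 + vv 0 2) := by rw [← hsplit1]
    rw [bil_add' hB] at e
    rw [c1A (A 2) r hr hx hy hz hsum, hxy] at e
    rw [e]; ring
  have eq2 : A 2 ![x,s*x,t*x] (vv 0 2) (vv 0 2)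
      = (1 + r (1/t)) * A 2 ![x,s*x,t*x] (vv 0 1) (vv 0 2) := by
    have e : A 2 ![x,s*x,t*x] (vv 0 2) (vv 0 2)
        = A 2 ![x,s*x,t*x] (vv 0 2) (vv 1 2 + vv 0 1) := by rw [← hsplit2]
    rw [bil_add' hB] at e
    rw [c1B (A 2) r hr hx hy hz hsum, hxz] at e
    rw [e, hB.1 (vv 0 2) (vv 0 1)]; ring
  -- pullbacks
  have hp1 := pullA A hsymm hinv hx hy hz hsum
  have hp2 := pullB A hsymm hinv hx hy hz hsum
  rw [eq1] at hp1
  rw [eq2] at hp2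
  have e1 : x + s*x = (1+s)*x := by ring
  have e2 : x + t*x = (1+t)*x := by ring
  have e3 : x/(x+s*x) = 1/(1+s) := by rw [e1]; rw [hxdef]; field_simp
  have e4 : x/(x+t*x) = 1/(1+t) := by rw [e2]; rw [hxdef]; field_simp
  rw [e3, e1] at hp1
  rw [e4, e2] at hp2
  -- clear denominators
  have d1 : ((1+s)*x) ^ 2 ≠ 0 := by positivity
  have d2 : ((1+t)*x) ^ 2 ≠ 0 := by positivity
  rw [div_mul_eq_mul_div, eq_div_iff d1] at hp1
  rw [div_mul_eq_mul_div, eq_div_iff d2] at hp2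
  refine mul_right_cancel₀ (pow_ne_zero 2 (ne_of_gt hx)) ?_
  linear_combination (-(1+t)^2*(1 + r (1/t))*x^2/4) * hp1 + ((1+s)^2*(1 + r (1/s))*x^2/4) * hp2

/-- Under invariance and condition (C1), with `λ = (1/2) A_1(Z_1^1,Z_1^1)_{p_{1/2}}`:
`A_1(Z_1^1,Z_1^1)_{p_u} = (λ/4)(1/u² + 1/(1-u)²)` for all `u ∈ (0,1)`. -/
theorem A1_formula_C1
    (A : (n : ℕ) → (Fin (n + 1) → ℝ) → (Fin (n + 1) → ℝ) → (Fin (n + 1) → ℝ) → ℝ)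
    (hsymm : SymmTF A) (hinv : InvariantSP A) (hC1 : CondC1 (A 2))
    (lam : ℝ) (hlam : lam = A 1 (pu (1 / 2)) (Zvec 1 0) (Zvec 1 0) / 2) :
    ∀ u ∈ Set.Ioo (0 : ℝ) 1,
      A 1 (pu u) (Zvec 1 0) (Zvec 1 0) =
        lam / 4 * (1 / u ^ 2 + 1 / (1 - u) ^ 2) := by
  obtain ⟨r, hrpos, hrmul, hr⟩ := hC1
  have hr1 : r 1 = 1 := by
    have h := hrmul 1 one_pos
    norm_num at h
    nlinarith [hrpos 1 one_pos]
  have key : ∀ t : ℝ, 0 < t →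
      8 * A 1 (pu (1/(1+t))) (Zvec 1 0) (Zvec 1 0)
        = A 1 (pu (1/2)) (Zvec 1 0) (Zvec 1 0) * ((1+t)^2 * (1 + r (1/t))) := by
    intro t ht
    have h := MI A hsymm hinv r hr one_pos ht
    have e : (1:ℝ)/(1+1) = 1/2 := by norm_num
    have e2 : (1:ℝ)/1 = 1 := by norm_num
    rw [e, e2, hr1] at h
    linear_combination -h
  intro u hu
  obtain ⟨hu0, hu1⟩ := hu
  have h1u : (0:ℝ) < 1 - u := by linarith
  have hune : u ≠ 0 := ne_of_gt hu0
  have h1une : (1:ℝ) - u ≠ 0 := ne_of_gt h1u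
  set F := A 1 (pu (1/2)) (Zvec 1 0) (Zvec 1 0) with hF
  set s := u / (1-u) with hsdef
  have hs0 : 0 < s := div_pos hu0 h1u
  have hs0' : 0 < (1-u)/u := div_pos h1u hu0
  have i1 : 1/(1 + (1-u)/u) = u := by
    rw [show 1 + (1-u)/u = 1/u from by field_simp; ring, one_div_one_div]
  have i1' : 1/((1-u)/u) = s := by rw [one_div_div]
  have i2 : 1/(1 + s) = 1 - u := by
    rw [show 1 + s = 1/(1-u) from by rw [hsdef]; field_simp; ring, one_div_one_div]
  have i2' : 1/s = (1-u)/u := by rw [hsdef, one_div_div]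
  have kA := key _ hs0'
  rw [i1, i1'] at kA
  rw [show 1 + (1-u)/u = 1/u from by field_simp; ring] at kA
  have kB := key _ hs0
  rw [i2, i2'] at kB
  rw [show 1 + s = 1/(1-u) from by rw [hsdef]; field_simp; ring] at kB
  have hsym := fsymm A hsymm hinv (Set.mem_Ioo.2 ⟨hu0, hu1⟩)
  rw [← hsym] at kB
  set a := r s with hadef
  set b := r ((1-u)/u) with hbdef
  have ha : 0 < a := hrpos s hs0
  have hb : 0 < b := hrpos _ hs0'
  have hab : a * b = 1 := by
    have h := hrmul s hs0
    rwa [i2'] at h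
  -- clear inverses
  have hq2 : ((1/u):ℝ)^2 * u^2 = 1 := by field_simp
  have hq3 : ((1/(1-u)):ℝ)^2 * (1-u)^2 = 1 := by field_simp
  have kA' : 8 * (A 1 (pu u) (Zvec 1 0) (Zvec 1 0)) * u^2 = F * (1 + a) := by
    calc 8 * (A 1 (pu u) (Zvec 1 0) (Zvec 1 0)) * u^2
        = F * ((1/u)^2 * (1+a)) * u^2 := by rw [kA]
      _ = F * (1+a) * ((1/u)^2 * u^2) := by ring
      _ = F * (1+a) := by rw [hq2, mul_one]
  have kB' : 8 * (A 1 (pu u) (Zvec 1 0) (Zvec 1 0)) * (1-u)^2 = F * (1 + b) := by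
    calc 8 * (A 1 (pu u) (Zvec 1 0) (Zvec 1 0)) * (1-u)^2
        = F * ((1/(1-u))^2 * (1+b)) * (1-u)^2 := by rw [kB]
      _ = F * (1+b) * ((1/(1-u))^2 * (1-u)^2) := by ring
      _ = F * (1+b) := by rw [hq3, mul_one]
  by_cases hF0 : F = 0
  · have hz : A 1 (pu u) (Zvec 1 0) (Zvec 1 0) * (8 * u^2) = 0 := by
      rw [hF0] at kA'
      linear_combination kA'
    have h8 : (8:ℝ) * u^2 ≠ 0 := by positivity
    have hfu : A 1 (pu u) (Zvec 1 0) (Zvec 1 0) = 0 := (mul_eq_zero.1 hz).resolve_right h8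
    rw [hfu, hlam, hF0]
    norm_num
  · have hD : F * ((1+a)*(1-u)^2) = F * ((1+b)*u^2) := by
      linear_combination u^2 * kB' - (1-u)^2 * kA'
    have hD' := mul_left_cancel₀ hF0 hD
    have hfact : (a*(1-u)^2 - u^2)*(1+a) = 0 := by
      linear_combination a * hD' + u^2 * hab
    have h1a : (0:ℝ) < 1 + a := by linarith
    have hG : a*(1-u)^2 = u^2 := by
      have h := (mul_eq_zero.1 hfact).resolve_right (ne_of_gt h1a)
      linarith
    rw [hlam]
    field_simp
    linear_combination (1-u)^2 * kA' + F * hG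
end
end

section
/- For each n ∈ ℕ let A_n be a symmetric (0,2)-tensor field on P_n, and assume that for every n ∈ ℕ and each scalar patched Markov embedding G_n : P_n → P_{n+1}, the pullback of A_{n+1} by G_n equals A_n, and that A_1 and A_2 satisfy condition (C2). Define M(u) := sgn(2u−1)·√(A_1(Z_1^1, Z_1^1)_{p_u}) for u ∈ (0,1), and μ := (16/9)·M(1/3)². Then M(u) = (√μ/2)·(1/(1−u) − 1/u) for every u ∈ (0,1). -/
open Finset

noncomputable section

lemma psi_eq (α u : ℝ) :
    psiPt α u (Equiv.refl (Fin 3)) = ![α * u, α * (1 - u), 1 - α] := by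
  funext I
  fin_cases I <;> simp [psiPt, sPatch, pu, Fin.sum_univ_two, Fin.last]

lemma bilin_zero {n : ℕ} {B : (Fin (n + 1) → ℝ) → (Fin (n + 1) → ℝ) → ℝ}
    (h : IsSymmBilin B) (Y : Fin (n + 1) → ℝ) : B 0 Y = 0 := by
  have h2 := h.2 1 (0 : Fin (n + 1) → ℝ) 0 Y
  simp at h2
  linarith

lemma bilin_smul {n : ℕ} {B : (Fin (n + 1) → ℝ) → (Fin (n + 1) → ℝ) → ℝ}
    (h : IsSymmBilin B) (c : ℝ) (X Y : Fin (n + 1) → ℝ) : B (c • X) Y = c * B X Y := by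
  have h2 := h.2 c X 0 Y
  simpa [bilin_zero h] using h2

lemma bilin_add {n : ℕ} {B : (Fin (n + 1) → ℝ) → (Fin (n + 1) → ℝ) → ℝ}
    (h : IsSymmBilin B) (X Y Z : Fin (n + 1) → ℝ) : B (X + Y) Z = B X Z + B Y Z := by
  have h2 := h.2 1 X Y Z
  simpa using h2

lemma bilin_smul2 {n : ℕ} {B : (Fin (n + 1) → ℝ) → (Fin (n + 1) → ℝ) → ℝ}
    (h : IsSymmBilin B) (c d : ℝ) (X Y : Fin (n + 1) → ℝ) :
    B (c • X) (d • Y) = c * d * B X Y := by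
  rw [bilin_smul h, h.1, bilin_smul h, h.1]; ring

lemma bilin_neg {n : ℕ} {B : (Fin (n + 1) → ℝ) → (Fin (n + 1) → ℝ) → ℝ}
    (h : IsSymmBilin B) (X Y : Fin (n + 1) → ℝ) : B (-X) Y = - B X Y := by
  have := bilin_smul h (-1) X Y
  simpa using this
lemma master_lemma (A2 : (Fin 3 → ℝ) → (Fin 3 → ℝ) → (Fin 3 → ℝ) → ℝ) (M : ℝ → ℝ)
    (α u : ℝ) (hα : α ∈ Set.Ioo (0:ℝ) 1) (hu : u ∈ Set.Ioo (0:ℝ) 1)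
    (hbil : IsSymmBilin (A2 (psiPt α u (Equiv.refl (Fin 3)))))
    (hpar : ∀ i j k l : Fin 3, i ≠ j → k ≠ l →
      A2 (psiPt α u (Equiv.refl (Fin 3)))
        (dHvec (psiPt α u (Equiv.refl (Fin 3))) i j)
        (dHvec (psiPt α u (Equiv.refl (Fin 3))) k l) =
        M (uRatio α u i j) * M (uRatio α u k l))
    (i j k l : Fin 3) (hij : i ≠ j) (hkl : k ≠ l) :
    A2 (psiPt α u (Equiv.refl (Fin 3))) (Zvec 2 i - Zvec 2 j) (Zvec 2 k - Zvec 2 l) =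
      (2 * M (uRatio α u i j) /
          (psiPt α u (Equiv.refl (Fin 3)) i + psiPt α u (Equiv.refl (Fin 3)) j)) *
      (2 * M (uRatio α u k l) /
          (psiPt α u (Equiv.refl (Fin 3)) k + psiPt α u (Equiv.refl (Fin 3)) l)) := by
  obtain ⟨hα1, hα2⟩ := hα
  obtain ⟨hu1, hu2⟩ := hu
  have hpos : ∀ m : Fin 3, 0 < psiPt α u (Equiv.refl (Fin 3)) m := by
    intro m; rw [psi_eq]; fin_cases m <;> simp <;> nlinarith
  have h := hpar i j k l hij hkl
  have hd1 : dHvec (psiPt α u (Equiv.refl (Fin 3))) i j =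
      ((psiPt α u (Equiv.refl (Fin 3)) i + psiPt α u (Equiv.refl (Fin 3)) j) / 2) •
        (Zvec 2 i - Zvec 2 j) := rfl
  have hd2 : dHvec (psiPt α u (Equiv.refl (Fin 3))) k l =
      ((psiPt α u (Equiv.refl (Fin 3)) k + psiPt α u (Equiv.refl (Fin 3)) l) / 2) •
        (Zvec 2 k - Zvec 2 l) := rfl
  rw [hd1, hd2, bilin_smul2 hbil] at h
  have hs1 : 0 < psiPt α u (Equiv.refl (Fin 3)) i + psiPt α u (Equiv.refl (Fin 3)) j := by
    have := hpos i; have := hpos j; linarith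
  have hs2 : 0 < psiPt α u (Equiv.refl (Fin 3)) k + psiPt α u (Equiv.refl (Fin 3)) l := by
    have := hpos k; have := hpos l; linarith
  rw [div_mul_div_comm, eq_div_iff (by positivity)]
  linear_combination 4 * h

def Faux (M : ℝ → ℝ) (x y : ℝ) : ℝ := 2 * M (x / (x + y)) / (x + y)

lemma Faux_scale (M : ℝ → ℝ) (c x y : ℝ) (hc : c ≠ 0) :
    Faux M (c * x) (c * y) = Faux M x y / c := by
  unfold Faux
  rw [show c * x + c * y = c * (x + y) by ring, mul_div_mul_left _ _ hc, div_div]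
  ring_nf

lemma aux_arith' (a b c : ℝ) (h1 : a*a + b*a = c*a) (h2 : a*b + b*b = c*b)
    (h3 : a*c + b*c = c*c) : c = a + b := by
  have h : (c - (a+b))^2 = 0 := by linear_combination h1 + h2 - h3
  have := pow_eq_zero_iff (n := 2) (by norm_num) |>.mp h
  linarith

lemma aux_arith2 (a b : ℝ) (h1 : a * b = -(a * a)) (h2 : b * b = a * a) : b = -a := by
  have h : (b + a) ^ 2 = 0 := by linear_combination h2 + 2 * h1
  have := pow_eq_zero_iff (n := 2) (by norm_num) |>.mp h
  linarith
/-- Under invariance and condition (C2), with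
`M(u) = sgn(2u-1) √(A_1(Z_1^1,Z_1^1)_{p_u})` and `μ = (16/9) M(1/3)²`:
`M(u) = (√μ/2)(1/(1-u) - 1/u)` for all `u ∈ (0,1)`. -/
theorem M_formula_C2
    (A : (n : ℕ) → (Fin (n + 1) → ℝ) → (Fin (n + 1) → ℝ) → (Fin (n + 1) → ℝ) → ℝ)
    (hsymm : SymmTF A) (hinv : InvariantSP A) (hC2 : CondC2 (A 1) (A 2))
    (M : ℝ → ℝ)
    (hM : ∀ u : ℝ, M u = Real.sign (2 * u - 1) *
      Real.sqrt (A 1 (pu u) (Zvec 1 0) (Zvec 1 0)))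
    (mu : ℝ) (hmu : mu = (16 / 9) * (M (1 / 3)) ^ 2) :
    ∀ u ∈ Set.Ioo (0 : ℝ) 1,
      M u = (Real.sqrt mu / 2) * (1 / (1 - u) - 1 / u) := by
  obtain ⟨hpsd, hdeg, hpar⟩ := hC2
  -- membership of the ψ-points in P₂
  have hmem : ∀ α ∈ Set.Ioo (0:ℝ) 1, ∀ u ∈ Set.Ioo (0:ℝ) 1,
      psiPt α u (Equiv.refl (Fin 3)) ∈ Psim 2 := by
    intro α hα u hu
    obtain ⟨hα1, hα2⟩ := hα; obtain ⟨hu1, hu2⟩ := hu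
    rw [psi_eq]
    constructor
    · intro i; fin_cases i <;> constructor <;> simp <;> nlinarith
    · rw [Fin.sum_univ_three]; simp; ring
  have hbilψ : ∀ α ∈ Set.Ioo (0:ℝ) 1, ∀ u ∈ Set.Ioo (0:ℝ) 1,
      IsSymmBilin (A 2 (psiPt α u (Equiv.refl (Fin 3)))) := by
    intro α hα u hu
    exact hsymm 2 two_pos _ (hmem α hα u hu)
  -- parallelism in terms of M
  have hparM : ∀ α ∈ Set.Ioo (0:ℝ) 1, ∀ u ∈ Set.Ioo (0:ℝ) 1,
      ∀ i j k l : Fin 3, i ≠ j → k ≠ l →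
      A 2 (psiPt α u (Equiv.refl (Fin 3)))
        (dHvec (psiPt α u (Equiv.refl (Fin 3))) i j)
        (dHvec (psiPt α u (Equiv.refl (Fin 3))) k l) =
        M (uRatio α u i j) * M (uRatio α u k l) := by
    intro α hα u hu i j k l hij hkl
    have h := hpar α hα u hu (Equiv.refl (Fin 3)) i j k l hij hkl
    simp only [Equiv.refl_apply] at h
    rw [hM (uRatio α u i j), hM (uRatio α u k l)]
    exact h
  have master : ∀ α ∈ Set.Ioo (0:ℝ) 1, ∀ u ∈ Set.Ioo (0:ℝ) 1,
      ∀ i j k l : Fin 3, i ≠ j → k ≠ l →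
      A 2 (psiPt α u (Equiv.refl (Fin 3))) (Zvec 2 i - Zvec 2 j) (Zvec 2 k - Zvec 2 l) =
        (2 * M (uRatio α u i j) /
            (psiPt α u (Equiv.refl (Fin 3)) i + psiPt α u (Equiv.refl (Fin 3)) j)) *
        (2 * M (uRatio α u k l) /
            (psiPt α u (Equiv.refl (Fin 3)) k + psiPt α u (Equiv.refl (Fin 3)) l)) :=
    fun α hα u hu i j k l hij hkl =>
      master_lemma (A 2) M α u hα hu (hbilψ α hα u hu) (hparM α hα u hu) i j k l hij hkl
  -- oddness of M about 1/2
  have Modd : ∀ v ∈ Set.Ioo (0:ℝ) 1, M (1 - v) = - M v := by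
    intro v hv
    have hα : (1/2 : ℝ) ∈ Set.Ioo (0:ℝ) 1 := by norm_num
    have hψ : psiPt (1/2) v (Equiv.refl (Fin 3)) = ![1/2 * v, 1/2 * (1 - v), 1 - 1/2] :=
      psi_eq _ _
    have r01 : uRatio (1/2) v 0 1 = v := by
      simp only [uRatio, hψ]
      simp
      rw [show (2:ℝ)⁻¹ * v + 2⁻¹ * (1 - v) = 2⁻¹ by ring]
      field_simp
    have r10 : uRatio (1/2) v 1 0 = 1 - v := by
      simp only [uRatio, hψ]
      simp
      rw [show (2:ℝ)⁻¹ * (1 - v) + 2⁻¹ * v = 2⁻¹ by ring]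
      field_simp
    have hden : psiPt (1/2) v (Equiv.refl (Fin 3)) 0 + psiPt (1/2) v (Equiv.refl (Fin 3)) 1
        = 1/2 := by rw [hψ]; simp; ring
    have hden' : psiPt (1/2) v (Equiv.refl (Fin 3)) 1 + psiPt (1/2) v (Equiv.refl (Fin 3)) 0
        = 1/2 := by rw [hψ]; simp; ring
    have hB := hbilψ (1/2) hα v hv
    have e1 : A 2 (psiPt (1/2) v (Equiv.refl (Fin 3))) (Zvec 2 0 - Zvec 2 1)
        (Zvec 2 0 - Zvec 2 1) = (4 * M v) * (4 * M v) := by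
      have h := master (1/2) hα v hv 0 1 0 1 (by decide) (by decide)
      rw [r01, hden] at h
      rw [h]; ring
    have e2 : A 2 (psiPt (1/2) v (Equiv.refl (Fin 3))) (Zvec 2 0 - Zvec 2 1)
        (Zvec 2 1 - Zvec 2 0) = (4 * M v) * (4 * M (1 - v)) := by
      have h := master (1/2) hα v hv 0 1 1 0 (by decide) (by decide)
      rw [r01, r10, hden, hden'] at h
      rw [h]; ring
    have e3 : A 2 (psiPt (1/2) v (Equiv.refl (Fin 3))) (Zvec 2 1 - Zvec 2 0)
        (Zvec 2 1 - Zvec 2 0) = (4 * M (1 - v)) * (4 * M (1 - v)) := by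
      have h := master (1/2) hα v hv 1 0 1 0 (by decide) (by decide)
      rw [r10, hden'] at h
      rw [h]; ring
    have hneg : Zvec 2 1 - Zvec 2 0 = -(Zvec 2 0 - Zvec 2 1) := (neg_sub _ _).symm
    have e2' : (4 * M v) * (4 * M (1 - v)) = -((4 * M v) * (4 * M v)) := by
      rw [← e2, ← e1, hneg, hB.1, bilin_neg hB, hB.1]
    have e3' : (4 * M (1 - v)) * (4 * M (1 - v)) = (4 * M v) * (4 * M v) := by
      rw [← e3, ← e1, hneg, bilin_neg hB, hB.1, bilin_neg hB, hB.1]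
      ring
    have := aux_arith2 (4 * M v) (4 * M (1 - v)) e2' e3'
    linarith
  -- the cocycle identity on the simplex
  have cocycle1 : ∀ x y z : ℝ, 0 < x → 0 < y → 0 < z → x + y + z = 1 →
      Faux M x z = Faux M x y + Faux M y z := by
    intro x y z hx hy hz hsum
    have hxy : (0:ℝ) < x + y := by linarith
    have hα : x + y ∈ Set.Ioo (0:ℝ) 1 := ⟨hxy, by linarith⟩
    have hu : x / (x + y) ∈ Set.Ioo (0:ℝ) 1 :=
      ⟨by positivity, (div_lt_one hxy).mpr (by linarith)⟩
    have hψ : psiPt (x + y) (x / (x + y)) (Equiv.refl (Fin 3)) = ![x, y, z] := by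
      rw [psi_eq]
      rw [show (x + y) * (x / (x + y)) = x by field_simp,
        show (x + y) * (1 - x / (x + y)) = y by field_simp; ring,
        show 1 - (x + y) = z by linarith]
    have r01 : uRatio (x + y) (x / (x + y)) 0 1 = x / (x + y) := by
      simp only [uRatio, hψ]; simp
    have r12 : uRatio (x + y) (x / (x + y)) 1 2 = y / (y + z) := by
      simp only [uRatio, hψ]; simp
    have r02 : uRatio (x + y) (x / (x + y)) 0 2 = x / (x + z) := by
      simp only [uRatio, hψ]; simp
    have hB : IsSymmBilin (A 2 (![x, y, z])) := by
      have := hbilψ (x + y) hα (x / (x + y)) hu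
      rwa [hψ] at this
    have K : ∀ i j k l : Fin 3, i ≠ j → k ≠ l →
        A 2 (![x, y, z]) (Zvec 2 i - Zvec 2 j) (Zvec 2 k - Zvec 2 l) =
          (2 * M (uRatio (x + y) (x / (x + y)) i j) / ((![x, y, z]) i + (![x, y, z]) j)) *
          (2 * M (uRatio (x + y) (x / (x + y)) k l) / ((![x, y, z]) k + (![x, y, z]) l)) := by
      intro i j k l hij hkl
      have h := master (x + y) hα (x / (x + y)) hu i j k l hij hkl
      rwa [hψ] at h
    set a := 2 * M (x / (x + y)) / (x + y) with ha
    set b := 2 * M (y / (y + z)) / (y + z) with hb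
    set c := 2 * M (x / (x + z)) / (x + z) with hc
    have e_aa : A 2 (![x, y, z]) (Zvec 2 0 - Zvec 2 1) (Zvec 2 0 - Zvec 2 1) = a * a := by
      have h := K 0 1 0 1 (by decide) (by decide); rw [r01] at h
      simpa using h
    have e_ba : A 2 (![x, y, z]) (Zvec 2 1 - Zvec 2 2) (Zvec 2 0 - Zvec 2 1) = b * a := by
      have h := K 1 2 0 1 (by decide) (by decide); rw [r12, r01] at h
      simpa using h
    have e_ab : A 2 (![x, y, z]) (Zvec 2 0 - Zvec 2 1) (Zvec 2 1 - Zvec 2 2) = a * b := by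
      have h := K 0 1 1 2 (by decide) (by decide); rw [r01, r12] at h
      simpa using h
    have e_bb : A 2 (![x, y, z]) (Zvec 2 1 - Zvec 2 2) (Zvec 2 1 - Zvec 2 2) = b * b := by
      have h := K 1 2 1 2 (by decide) (by decide); rw [r12] at h
      simpa using h
    have e_ac : A 2 (![x, y, z]) (Zvec 2 0 - Zvec 2 1) (Zvec 2 0 - Zvec 2 2) = a * c := by
      have h := K 0 1 0 2 (by decide) (by decide); rw [r01, r02] at h
      simpa using h
    have e_bc : A 2 (![x, y, z]) (Zvec 2 1 - Zvec 2 2) (Zvec 2 0 - Zvec 2 2) = b * c := by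
      have h := K 1 2 0 2 (by decide) (by decide); rw [r12, r02] at h
      simpa using h
    have e_ca : A 2 (![x, y, z]) (Zvec 2 0 - Zvec 2 2) (Zvec 2 0 - Zvec 2 1) = c * a := by
      have h := K 0 2 0 1 (by decide) (by decide); rw [r02, r01] at h
      simpa using h
    have e_cb : A 2 (![x, y, z]) (Zvec 2 0 - Zvec 2 2) (Zvec 2 1 - Zvec 2 2) = c * b := by
      have h := K 0 2 1 2 (by decide) (by decide); rw [r02, r12] at h
      simpa using h
    have e_cc : A 2 (![x, y, z]) (Zvec 2 0 - Zvec 2 2) (Zvec 2 0 - Zvec 2 2) = c * c := by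
      have h := K 0 2 0 2 (by decide) (by decide); rw [r02] at h
      simpa using h
    have hV : Zvec 2 0 - Zvec 2 2 = (Zvec 2 0 - Zvec 2 1) + (Zvec 2 1 - Zvec 2 2) :=
      (sub_add_sub_cancel _ _ _).symm
    have h1 : a * a + b * a = c * a := by
      rw [← e_aa, ← e_ba, ← e_ca, hV, bilin_add hB]
    have h2 : a * b + b * b = c * b := by
      rw [← e_ab, ← e_bb, ← e_cb, hV, bilin_add hB]
    have h3 : a * c + b * c = c * c := by
      rw [← e_ac, ← e_bc, ← e_cc, hV, bilin_add hB]
    have hfin := aux_arith' a b c h1 h2 h3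
    simp only [Faux]
    rw [ha, hb, hc] at hfin
    exact hfin
  -- extend cocycle to all positive triples
  have hco : ∀ x y z : ℝ, 0 < x → 0 < y → 0 < z →
      Faux M x z = Faux M x y + Faux M y z := by
    intro x y z hx hy hz
    have hs : (0:ℝ) < x + y + z := by linarith
    have h := cocycle1 (x/(x+y+z)) (y/(x+y+z)) (z/(x+y+z)) (by positivity) (by positivity)
      (by positivity) (by field_simp)
    have hinv0 : ((x+y+z):ℝ)⁻¹ ≠ 0 := by positivity
    rw [show x/(x+y+z) = (x+y+z)⁻¹ * x by ring, show y/(x+y+z) = (x+y+z)⁻¹ * y by ring,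
      show z/(x+y+z) = (x+y+z)⁻¹ * z by ring, Faux_scale M _ _ _ hinv0,
      Faux_scale M _ _ _ hinv0, Faux_scale M _ _ _ hinv0, ← add_div] at h
    exact (div_left_inj' hinv0).mp h
  -- antisymmetry of Faux
  have hanti : ∀ x y : ℝ, 0 < x → 0 < y → Faux M y x = - Faux M x y := by
    intro x y hx hy
    have hxy : x + y ≠ 0 := by positivity
    have hyx : y + x ≠ 0 := by positivity
    have hin : x/(x+y) ∈ Set.Ioo (0:ℝ) 1 :=
      ⟨by positivity, (div_lt_one (by linarith)).mpr (by linarith)⟩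
    have h1 : y/(y+x) = 1 - x/(x+y) := by
      rw [show y + x = x + y from add_comm _ _, eq_sub_iff_add_eq, ← add_div,
        show y + x = x + y from add_comm _ _, div_self hxy]
    unfold Faux
    rw [h1, Modd _ hin, show y + x = x + y from add_comm _ _]
    ring
  have hmul : ∀ x z : ℝ, 0 < x → 0 < z → Faux M 1 (x*z) = Faux M 1 x + Faux M 1 z / x := by
    intro x z hx hz
    have h := hco 1 x (x*z) one_pos hx (by positivity)
    have h2 : Faux M x (x*z) = Faux M 1 z / x := by
      have := Faux_scale M x 1 z hx.ne'
      rw [mul_one] at this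
      exact this
    rw [h2] at h; exact h
  have hform : ∀ x : ℝ, 0 < x → Faux M 1 x = 2 * Faux M 1 2 * (1 - 1/x) := by
    intro x hx
    have h1 := hmul x 2 hx two_pos
    have h2 := hmul 2 x two_pos hx
    rw [show (x:ℝ)*2 = 2*x by ring] at h1
    have goal' : Faux M 1 x = 2*Faux M 1 2 - 2*(Faux M 1 2 / x) := by linarith
    rw [show 2*Faux M 1 2*(1-1/x) = 2*Faux M 1 2 - 2*(Faux M 1 2/x) by ring]
    exact goal'
  set k := Faux M 1 2 with hk
  have hMk : ∀ v : ℝ, v ∈ Set.Ioo (0:ℝ) 1 → M v = k * (1/v - 1/(1-v)) := by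
    intro v hv
    obtain ⟨hv1, hv2⟩ := hv
    have hv3 : (0:ℝ) < 1 - v := by linarith
    have h := hco v 1 (1-v) hv1 one_pos hv3
    have hv1' : Faux M v (1-v) = 2 * M v := by
      unfold Faux
      rw [show v + (1-v) = (1:ℝ) by ring]
      simp
    have ha : Faux M v 1 = - Faux M 1 v := hanti 1 v one_pos hv1
    rw [hv1', ha, hform v hv1, hform (1-v) hv3] at h
    have h' : 2 * M v = 2 * (k * (1/v - 1/(1-v))) := by rw [h]; ring
    linarith
  intro u hu
  have hMu := hMk u hu
  have hk13 : k = 2 * M (1/3) / 3 := by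
    rw [hk]; unfold Faux; norm_num
  have hM13 : M (1/3) ≤ 0 := by
    rw [hM (1/3)]
    have hneg : (2 * (1/3 : ℝ) - 1) < 0 := by norm_num
    rw [Real.sign_of_neg hneg]
    have := Real.sqrt_nonneg (A 1 (pu (1/3)) (Zvec 1 0) (Zvec 1 0))
    linarith
  have hk0 : k ≤ 0 := by rw [hk13]; linarith
  have hM13k : M (1/3) = 3*k/2 := by rw [hk13]; ring
  have hsq : Real.sqrt mu = -2 * k := by
    have hmu' : mu = (-2*k)^2 := by rw [hmu, hM13k]; ring
    rw [hmu', Real.sqrt_sq (by linarith)]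
  rw [hMu, hsq]
  ring
end
end
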